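/- Let n ≥ 2. For every (x₁,…,xₙ) ∈ [0,1]ⁿ, the point (x₁,…,xₙ, max(x₁+⋯+xₙ−(n−1), 0)) belongs to the convex hull in ℝ^{n+1} of the 2ⁿ points v(ε) = (ε₁,…,εₙ, ∏ᵢ εᵢ) with ε ∈ {0,1}ⁿ. (Sharpness of the lower Fréchet–Hoeffding bound for the conjunction of n conditional events.) -/

import Mathlib

open Finset

private lemma sum_pi_succ {n : ℕ} (f : (Fin (n+1) → Bool) → ℝ) :
    ∑ ε, f ε = ∑ ε' : Fin n → Bool, (f (Fin.cons true ε') + f (Fin.cons false ε')) := by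
  rw [← (Fin.consEquiv fun _ => Bool).sum_comp f]
  rw [Fintype.sum_prod_type, Fintype.sum_bool, ← Finset.sum_add_distrib]
  simp [Fin.consEquiv]

private lemma key (n : ℕ) (x : Fin n → ℝ) (hx : ∀ i, x i ∈ Set.Icc (0 : ℝ) 1) :
    ∃ w : (Fin n → Bool) → ℝ, (∀ ε, 0 ≤ w ε) ∧ (∑ ε, w ε) = 1 ∧
      (∀ i, (∑ ε, w ε * (if ε i then 1 else 0)) = x i) ∧
      (∑ ε, w ε * (if ε = (fun _ => true) then 1 else 0))
        = max ((∑ i, x i) - ((n : ℝ) - 1)) 0 := by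
  induction n with
  | zero =>
      refine ⟨fun _ => 1, fun _ => zero_le_one, ?_, fun i => i.elim0, ?_⟩
      · simp
      · have h : ∀ ε : Fin 0 → Bool, ε = (fun _ => true) := fun ε => funext fun i => i.elim0
        simp [h]
  | succ n ih =>
      set x' : Fin n → ℝ := Fin.tail x with hx'def
      have hx' : ∀ i, x' i ∈ Set.Icc (0 : ℝ) 1 := fun i => hx i.succ
      obtain ⟨w, hw0, hw1, hwm, hwt⟩ := ih x' hx'
      set b : ℝ := x 0 with hbdef
      have hb0 : 0 ≤ b := (hx 0).1
      have hb1 : b ≤ 1 := (hx 0).2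
      set a : ℝ := max ((∑ i, x' i) - ((n : ℝ) - 1)) 0 with hadef
      have ha0 : 0 ≤ a := le_max_right _ _
      -- w at the all-true vector equals a
      have hwone : w (fun _ => true) = a := by
        rw [← hwt]
        rw [Finset.sum_congr rfl (fun ε _ => by rw [mul_ite, mul_one, mul_zero])]
        rw [Finset.sum_ite_eq' Finset.univ (fun _ => true) w]
        simp
      have ha1 : a ≤ 1 := by
        rw [← hwone, ← hw1]
        exact Finset.single_le_sum (fun ε _ => hw0 ε) (Finset.mem_univ _)
      set a' : ℝ := max (a + b - 1) 0 with ha'def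
      have ha'0 : 0 ≤ a' := le_max_right _ _
      have ha'a : a' ≤ a := max_le (by linarith) ha0
      have ha'b : a' ≤ b := max_le (by linarith) hb0
      have hq : 0 ≤ 1 - a - b + a' := by
        rcases le_or_gt (a + b - 1) 0 with h | h
        · have h2 : a' = 0 := max_eq_right h
          rw [h2]; linarith
        · have h2 : a' = a + b - 1 := max_eq_left h.le
          rw [h2]; ring_nf; linarith [le_refl (0:ℝ)]
      -- the rest sum
      have hrest : ∑ ε' ∈ Finset.univ.erase (fun _ => true), w ε' = 1 - a := by
        have := Finset.sum_erase_add Finset.univ w (Finset.mem_univ (fun _ : Fin n => true))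
        rw [hwone] at this
        linarith [hw1 ▸ this]
      have hzero : a = 1 → ∀ ε', ε' ≠ (fun _ => true) → w ε' = 0 := by
        intro h1 ε' hne
        have h0 : ∑ ε' ∈ Finset.univ.erase (fun _ => true), w ε' = 0 := by
          rw [hrest, h1]; ring
        exact (Finset.sum_eq_zero_iff_of_nonneg (fun ε _ => hw0 ε)).1 h0 ε'
          (Finset.mem_erase.2 ⟨hne, Finset.mem_univ _⟩)
      classical
      set W : (Fin (n+1) → Bool) → ℝ := fun ε =>
        if Fin.tail ε = (fun _ => true)
        then (if ε 0 then a' else a - a')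
        else w (Fin.tail ε) * (if ε 0 then (b - a') / (1 - a) else (1 - a - b + a') / (1 - a))
        with hWdef
      have hWpair : ∀ ε', W (Fin.cons true ε') + W (Fin.cons false ε') = w ε' := by
        intro ε'
        by_cases h : ε' = (fun _ => true)
        · simp only [hWdef, Fin.tail_cons, h, if_pos rfl, Fin.cons_zero]
          norm_num
          linarith [hwone]
        · simp only [hWdef, Fin.tail_cons, if_neg h, Fin.cons_zero]
          norm_num
          rcases eq_or_lt_of_le ha1 with h1 | h1
          · rw [hzero h1 ε' h]; ring
          · have hne : (1:ℝ) - a ≠ 0 := by linarith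
            rw [← mul_add, ← add_div]
            have h3 : (b - a' + (1 - a - b + a')) = 1 - a := by ring
            rw [h3, div_self hne, mul_one]
      refine ⟨W, ?_, ?_, ?_, ?_⟩
      · intro ε
        simp only [hWdef]
        split_ifs with h1 h2 h2
        · exact ha'0
        · linarith
        · exact mul_nonneg (hw0 _) (div_nonneg (by linarith) (by linarith))
        · exact mul_nonneg (hw0 _) (div_nonneg hq (by linarith))
      · rw [sum_pi_succ W, Finset.sum_congr rfl (fun ε' _ => hWpair ε'), hw1]
      · intro i
        refine Fin.cases ?_ ?_ i
        · -- i = 0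
          rw [sum_pi_succ (fun ε => W ε * (if ε 0 then 1 else 0))]
          simp only [Fin.cons_zero, if_true, mul_one, mul_zero, add_zero,
            Bool.false_eq_true, if_false]
          rw [← Finset.sum_erase_add Finset.univ _ (Finset.mem_univ (fun _ : Fin n => true))]
          have hW1 : W (Fin.cons true (fun _ => true)) = a' := by
            simp [hWdef, Fin.tail_cons, Fin.cons_zero]
          have hWe : ∀ ε' ∈ Finset.univ.erase (fun _ : Fin n => true),
              W (Fin.cons true ε') = w ε' * ((b - a') / (1 - a)) := by
            intro ε' hε'
            have hne := (Finset.mem_erase.1 hε').1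
            simp [hWdef, Fin.tail_cons, hne, Fin.cons_zero]
          rw [Finset.sum_congr rfl hWe, hW1, ← Finset.sum_mul, hrest, ← hbdef]
          rcases eq_or_lt_of_le ha1 with h1 | h1
          · have h2 : a' = b := by
              have h3 : a + b - 1 = b := by rw [h1]; ring
              rw [ha'def, h3]; exact max_eq_left hb0
            rw [h1, h2]; norm_num
          · have hne : (1:ℝ) - a ≠ 0 := by linarith
            have h4 : (1-a) * ((b - a')/(1-a)) = b - a' := by field_simp
            rw [h4]; ring
        · intro j
          rw [sum_pi_succ (fun ε => W ε * (if ε j.succ then 1 else 0))]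
          have hstep : ∀ ε' : Fin n → Bool,
              W (Fin.cons true ε') * (if (Fin.cons true ε' : Fin (n+1) → Bool) j.succ then (1:ℝ) else 0)
              + W (Fin.cons false ε') * (if (Fin.cons false ε' : Fin (n+1) → Bool) j.succ then (1:ℝ) else 0)
              = w ε' * (if ε' j then (1:ℝ) else 0) := by
            intro ε'
            rw [Fin.cons_succ, Fin.cons_succ, ← add_mul, hWpair]
          rw [Finset.sum_congr rfl (fun ε' _ => hstep ε'), hwm j]
          rfl
      · have hcol : ∀ ε : Fin (n+1) → Bool,
            W ε * (if ε = (fun _ => true) then 1 else 0)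
              = if ε = (fun _ => true) then a' else 0 := by
          intro ε
          by_cases h : ε = (fun _ => true)
          · rw [if_pos h, if_pos h, mul_one, h]
            have ht : Fin.tail (fun _ : Fin (n+1) => true) = (fun _ : Fin n => true) := rfl
            simp [hWdef, ht]
          · rw [if_neg h, if_neg h, mul_zero]
        rw [Finset.sum_congr rfl (fun ε _ => hcol ε),
          Finset.sum_ite_eq' Finset.univ (fun _ : Fin (n+1) => true) (fun _ => a')]
        simp only [Finset.mem_univ, if_true]
        have hsum : ∑ i, x i = b + ∑ i, x' i := by
          rw [Fin.sum_univ_succ]; rfl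
        rw [hsum]
        push_cast
        rcases le_or_gt ((n:ℝ) - 1) (∑ i, x' i) with h | h
        · have h2 : a = ∑ i, x' i - ((n:ℝ)-1) := max_eq_left (by linarith)
          rw [ha'def, h2]
          congr 1
          ring
        · have h2 : a = 0 := max_eq_right (by linarith)
          rw [ha'def, h2]
          have e1 : max (0 + b - 1) 0 = (0:ℝ) := max_eq_right (by linarith)
          have e2 : max (b + ∑ i, x' i - ((n:ℝ)+1-1)) 0 = 0 := max_eq_right (by linarith)
          rw [e1, e2]

/-- Sharpness of the lower Fréchet–Hoeffding bound: for every
    `(x₁,…,xₙ) ∈ [0,1]ⁿ` the point `(x₁,…,xₙ, T_L(x₁,…,xₙ))` belongs to the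
    convex hull of the 2ⁿ points `v(ε) = (ε₁,…,εₙ, ∏ᵢ εᵢ)`, `ε ∈ {0,1}ⁿ`. -/
theorem lower_frechet_bound_sharp (n : ℕ) (hn : 2 ≤ n)
    (x : Fin n → ℝ) (hx : ∀ i, x i ∈ Set.Icc (0 : ℝ) 1) :
    (x, max ((∑ i, x i) - ((n : ℝ) - 1)) 0) ∈
      convexHull ℝ {q : (Fin n → ℝ) × ℝ | ∃ ε : Fin n → Bool,
        q = (fun i => if ε i then 1 else 0, ∏ i, if ε i then (1 : ℝ) else 0)} := by
  classical
  obtain ⟨w, hw0, hw1, hwm, hwt⟩ := key n x hx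
  have hprod : ∀ ε : Fin n → Bool,
      (∏ i, if ε i then (1:ℝ) else 0) = if ε = (fun _ => true) then 1 else 0 := by
    intro ε
    by_cases h : ε = (fun _ => true)
    · rw [if_pos h, h]; simp
    · rw [if_neg h]
      have hex : ∃ i, ε i = false := by
        by_contra hc
        push_neg at hc
        exact h (funext fun i => by simpa using hc i)
      obtain ⟨i, hi⟩ := hex
      exact Finset.prod_eq_zero (Finset.mem_univ i) (by simp [hi])
  set v : (Fin n → Bool) → (Fin n → ℝ) × ℝ := fun ε =>
    (fun i => if ε i then 1 else 0, ∏ i, if ε i then (1:ℝ) else 0) with hv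
  have hmem : Finset.univ.centerMass w v ∈
      convexHull ℝ {q : (Fin n → ℝ) × ℝ | ∃ ε : Fin n → Bool,
        q = (fun i => if ε i then 1 else 0, ∏ i, if ε i then (1 : ℝ) else 0)} :=
    Finset.centerMass_mem_convexHull _ (fun ε _ => hw0 ε) (by rw [hw1]; norm_num)
      (fun ε _ => ⟨ε, rfl⟩)
  rw [Finset.centerMass_eq_of_sum_1 _ _ hw1] at hmem
  have hpt : (∑ ε, w ε • v ε) = (x, max ((∑ i, x i) - ((n : ℝ) - 1)) 0) := by
    refine Prod.ext ?_ ?_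
    · rw [Prod.fst_sum]
      funext i
      rw [Finset.sum_apply]
      simp only [hv, Pi.smul_apply, smul_eq_mul]
      exact hwm i
    · rw [Prod.snd_sum]
      simp only [hv, smul_eq_mul]
      rw [Finset.sum_congr rfl (fun ε _ => by rw [hprod ε])]
      exact hwt
  rwa [hpt] at hmem
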